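/- Let ε > 0, t ≥ 1 integer, C_0, C_1 > 0 with C_0 + C_1 = 1, and suppose smoothness indicators I_0(h), I_1(h) satisfy |I_0(h) - I_1(h)| ≤ K h^(r-1+4) and I_j(h) ≥ c h^4 for j = 0,1 and small h > 0, with 0 < ε ≤ h^4 (smooth case). Then the nonlinear weights ω_j = [C_j/(ε+I_j)^t] / [C_0/(ε+I_0)^t + C_1/(ε+I_1)^t] satisfy ω_0 = C_0 + O(h^(r-1)) and ω_1 = C_1 + O(h^(r-1)) as h → 0. -/

import Mathlib

lemma weno_aux_pow_sub (d : ℝ) (hd : 0 ≤ d) :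
    ∀ (t : ℕ) (a b : ℝ), 0 < a → 0 ≤ b → |a - b| ≤ d * a →
      |a ^ t - b ^ t| ≤ t * (1 + d) ^ (t - 1) * d * a ^ t := by
  intro t
  induction t with
  | zero => intro a b _ _ _; simp
  | succ n ih =>
    intro a b ha hb hab
    have habs := abs_le.mp hab
    have hb' : b ≤ (1 + d) * a := by nlinarith [habs.2]
    have hbn : b ^ n ≤ (1 + d) ^ n * a ^ n := by
      calc b ^ n ≤ ((1 + d) * a) ^ n := pow_le_pow_left₀ hb hb' n
        _ = (1 + d) ^ n * a ^ n := mul_pow _ _ _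
    have key : a ^ (n+1) - b ^ (n+1) = a * (a ^ n - b ^ n) + (a - b) * b ^ n := by ring
    have h1 : |a ^ (n+1) - b ^ (n+1)| ≤ a * |a ^ n - b ^ n| + |a - b| * b ^ n := by
      rw [key]
      refine (abs_add_le _ _).trans ?_
      rw [abs_mul, abs_mul, abs_of_pos ha, abs_of_nonneg (pow_nonneg hb n)]
    have h2 := ih a b ha hb hab
    have hmono : (1 + d) ^ (n - 1) ≤ (1 + d) ^ n := pow_le_pow_right₀ (by linarith) (Nat.sub_le n 1)
    have hapos : (0:ℝ) < a ^ n := pow_pos ha n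
    have h3 : a * |a ^ n - b ^ n| ≤ a * ((n : ℝ) * (1 + d) ^ (n - 1) * d * a ^ n) :=
      mul_le_mul_of_nonneg_left h2 ha.le
    have h4 : |a - b| * b ^ n ≤ (d * a) * ((1 + d) ^ n * a ^ n) :=
      mul_le_mul hab hbn (pow_nonneg hb n) (by positivity)
    have hpd : (0:ℝ) < (1 + d) ^ n := by positivity
    have hgoal : (↑(n+1) : ℝ) * (1 + d) ^ ((n+1) - 1) * d * a ^ (n+1)
        = ((n : ℝ) + 1) * (1 + d) ^ n * d * (a * a ^ n) := by
      push_cast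
      ring_nf
    calc |a ^ (n+1) - b ^ (n+1)|
        ≤ a * ((n : ℝ) * (1 + d) ^ (n - 1) * d * a ^ n) + (d * a) * ((1 + d) ^ n * a ^ n) := by
          linarith [h1, h3, h4]
      _ ≤ (↑(n+1) : ℝ) * (1 + d) ^ ((n+1) - 1) * d * a ^ (n+1) := by
          rw [hgoal]
          nlinarith [mul_le_mul_of_nonneg_left hmono (by positivity : (0:ℝ) ≤ (n:ℝ) * d * (a * a ^ n)), ha, hapos, hd, hpd]

theorem weno_weights_smooth_case (r t : ℕ) (hr : 1 ≤ r) (ht : 1 ≤ t)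
    (C0 C1 c K : ℝ) (hC0 : 0 < C0) (hC1 : 0 < C1) (hCsum : C0 + C1 = 1)
    (hc : 0 < c) (hK : 0 ≤ K)
    (I0 I1 : ℝ → ℝ)
    (hclose : ∀ h : ℝ, 0 < h → h ≤ 1 → |I0 h - I1 h| ≤ K * h ^ (r - 1 + 4))
    (hI0 : ∀ h : ℝ, 0 < h → h ≤ 1 → c * h ^ 4 ≤ I0 h)
    (hI1 : ∀ h : ℝ, 0 < h → h ≤ 1 → c * h ^ 4 ≤ I1 h) :
    ∃ C : ℝ, ∀ ε h : ℝ, 0 < h → h ≤ 1 → 0 < ε → ε ≤ h ^ 4 →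
      let α0 : ℝ := C0 / (ε + I0 h) ^ t
      let α1 : ℝ := C1 / (ε + I1 h) ^ t
      |α0 / (α0 + α1) - C0| ≤ C * h ^ (r - 1) ∧
      |α1 / (α0 + α1) - C1| ≤ C * h ^ (r - 1) := by
  refine ⟨t * (1 + K / c) ^ t * (K / c), ?_⟩
  intro ε h hh hh1 hε hεh
  intro α0 α1
  set Cf : ℝ := t * (1 + K / c) ^ t * (K / c) with hCf
  have hKc : 0 ≤ K / c := by positivity
  have hh4 : (0:ℝ) < h ^ 4 := by positivity
  have hhr : 0 < h ^ (r - 1) := by positivity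
  have hhr1 : h ^ (r - 1) ≤ 1 := pow_le_one₀ hh.le hh1
  set a : ℝ := ε + I0 h with haa
  set b : ℝ := ε + I1 h with hbb
  have hca : c * h ^ 4 ≤ a := by have := hI0 h hh hh1; simp only [haa]; linarith
  have hcb : c * h ^ 4 ≤ b := by have := hI1 h hh hh1; simp only [hbb]; linarith
  have ha : 0 < a := lt_of_lt_of_le (by positivity) hca
  have hb : 0 < b := lt_of_lt_of_le (by positivity) hcb
  set d : ℝ := (K / c) * h ^ (r - 1) with hdd
  have hd : 0 ≤ d := by positivity
  have hdKc : d ≤ K / c := by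
    calc d ≤ (K / c) * 1 := by apply mul_le_mul_of_nonneg_left hhr1 hKc
      _ = K / c := mul_one _
  have hKh : K * h ^ (r - 1 + 4) = d * (c * h ^ 4) := by
    rw [pow_add, hdd]; field_simp
  have hclose' := hclose h hh hh1
  have hab : |a - b| ≤ d * a := by
    have e : a - b = I0 h - I1 h := by simp only [haa, hbb]; ring
    rw [e]
    calc |I0 h - I1 h| ≤ K * h ^ (r - 1 + 4) := hclose'
      _ = d * (c * h ^ 4) := hKh
      _ ≤ d * a := mul_le_mul_of_nonneg_left hca hd
  have hba : |b - a| ≤ d * b := by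
    have e : b - a = I1 h - I0 h := by simp only [haa, hbb]; ring
    rw [e]
    calc |I1 h - I0 h| ≤ K * h ^ (r - 1 + 4) := by rw [abs_sub_comm]; exact hclose'
      _ = d * (c * h ^ 4) := hKh
      _ ≤ d * b := mul_le_mul_of_nonneg_left hcb hd
  have hAB := weno_aux_pow_sub d hd t a b ha hb.le hab
  have hBA := weno_aux_pow_sub d hd t b a hb ha.le hba
  -- bound the coefficient
  have hcoef : (t : ℝ) * (1 + d) ^ (t - 1) * d ≤ Cf * h ^ (r - 1) := by
    have h1 : (1 + d) ^ (t - 1) ≤ (1 + K / c) ^ t := by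
      calc (1 + d) ^ (t - 1) ≤ (1 + K / c) ^ (t - 1) :=
            pow_le_pow_left₀ (by linarith) (by linarith) _
        _ ≤ (1 + K / c) ^ t := pow_le_pow_right₀ (by linarith) (Nat.sub_le t 1)
    have h2 : (t : ℝ) * (1 + d) ^ (t - 1) * d ≤ (t : ℝ) * (1 + K / c) ^ t * d := by
      have := mul_le_mul_of_nonneg_left h1 (by positivity : (0:ℝ) ≤ (t:ℝ))
      exact mul_le_mul_of_nonneg_right this hd
    calc (t : ℝ) * (1 + d) ^ (t - 1) * d ≤ (t : ℝ) * (1 + K / c) ^ t * d := h2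
      _ = Cf * h ^ (r - 1) := by rw [hCf, hdd]; ring
  have hA : (0:ℝ) < a ^ t := pow_pos ha t
  have hB : (0:ℝ) < b ^ t := pow_pos hb t
  have hAB' : |a ^ t - b ^ t| ≤ Cf * h ^ (r - 1) * a ^ t :=
    hAB.trans (mul_le_mul_of_nonneg_right hcoef hA.le)
  have hBA' : |b ^ t - a ^ t| ≤ Cf * h ^ (r - 1) * b ^ t :=
    hBA.trans (mul_le_mul_of_nonneg_right hcoef hB.le)
  have hD : (0:ℝ) < C0 * b ^ t + C1 * a ^ t := by positivity
  have hS : (0:ℝ) < C0 / a ^ t + C1 / b ^ t := by positivity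
  have hC0le : C0 ≤ 1 := by linarith
  have hC1le : C1 ≤ 1 := by linarith
  have hCfh : 0 ≤ Cf * h ^ (r - 1) := le_trans (by positivity) hcoef
  have hABne : (a ^ t * b ^ t) ≠ 0 := (mul_pos hA hB).ne'
  have key1 : α0 * (a ^ t * b ^ t) = C0 * b ^ t := by
    simp only [α0, haa]
    field_simp [show ε + I0 h ≠ 0 from ha.ne']
    all_goals ring
  have key1' : α1 * (a ^ t * b ^ t) = C1 * a ^ t := by
    simp only [α1, hbb]
    field_simp [show ε + I1 h ≠ 0 from hb.ne']
    all_goals ring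
  have key2 : (α0 + α1) * (a ^ t * b ^ t) = C0 * b ^ t + C1 * a ^ t := by
    simp only [α0, α1, haa, hbb]
    field_simp [show ε + I0 h ≠ 0 from ha.ne', show ε + I1 h ≠ 0 from hb.ne']
    all_goals ring
  have hω0 : α0 / (α0 + α1) = C0 * b ^ t / (C0 * b ^ t + C1 * a ^ t) := by
    rw [← key2, ← key1, mul_div_mul_right _ _ hABne]
  have hω1 : α1 / (α0 + α1) = C1 * a ^ t / (C0 * b ^ t + C1 * a ^ t) := by
    rw [← key2, ← key1', mul_div_mul_right _ _ hABne]
  have enum0 : C0 * b ^ t - C0 * (C0 * b ^ t + C1 * a ^ t) = C0 * C1 * (b ^ t - a ^ t) := by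
    linear_combination (-(C0 * b ^ t)) * hCsum
  have enum1 : C1 * a ^ t - C1 * (C0 * b ^ t + C1 * a ^ t) = C0 * C1 * (a ^ t - b ^ t) := by
    linear_combination (-(C1 * a ^ t)) * hCsum
  constructor
  · have e0 : α0 / (α0 + α1) - C0 = C0 * C1 * (b ^ t - a ^ t) / (C0 * b ^ t + C1 * a ^ t) := by
      rw [hω0, ← enum0, sub_div, mul_div_cancel_right₀ _ hD.ne']
    rw [e0, abs_div, abs_of_pos hD, div_le_iff₀ hD, abs_mul, abs_mul,
      abs_of_pos hC0, abs_of_pos hC1]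
    have hXB : 0 ≤ Cf * h ^ (r - 1) * b ^ t := mul_nonneg hCfh hB.le
    have step1 : C0 * C1 * |b ^ t - a ^ t| ≤ C0 * C1 * (Cf * h ^ (r - 1) * b ^ t) :=
      mul_le_mul_of_nonneg_left hBA' (by positivity)
    have step2 : C0 * C1 * (Cf * h ^ (r - 1) * b ^ t) ≤ C0 * (Cf * h ^ (r - 1) * b ^ t) := by
      exact mul_le_mul_of_nonneg_right (mul_le_of_le_one_right hC0.le hC1le) hXB
    have e3 : C0 * (Cf * h ^ (r - 1) * b ^ t) = Cf * h ^ (r - 1) * (C0 * b ^ t) := by ring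
    have e4 : Cf * h ^ (r - 1) * (C0 * b ^ t + C1 * a ^ t)
        = Cf * h ^ (r - 1) * (C0 * b ^ t) + Cf * h ^ (r - 1) * (C1 * a ^ t) := by ring
    have e5 : 0 ≤ Cf * h ^ (r - 1) * (C1 * a ^ t) := mul_nonneg hCfh (mul_pos hC1 hA).le
    linarith
  · have e1 : α1 / (α0 + α1) - C1 = C0 * C1 * (a ^ t - b ^ t) / (C0 * b ^ t + C1 * a ^ t) := by
      rw [hω1, ← enum1, sub_div, mul_div_cancel_right₀ _ hD.ne']
    rw [e1, abs_div, abs_of_pos hD, div_le_iff₀ hD, abs_mul, abs_mul,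
      abs_of_pos hC0, abs_of_pos hC1]
    have hXA : 0 ≤ Cf * h ^ (r - 1) * a ^ t := mul_nonneg hCfh hA.le
    have step1 : C0 * C1 * |a ^ t - b ^ t| ≤ C0 * C1 * (Cf * h ^ (r - 1) * a ^ t) :=
      mul_le_mul_of_nonneg_left hAB' (by positivity)
    have step2 : C0 * C1 * (Cf * h ^ (r - 1) * a ^ t) ≤ C1 * (Cf * h ^ (r - 1) * a ^ t) := by
      exact mul_le_mul_of_nonneg_right (mul_le_of_le_one_left hC1.le hC0le) hXA
    have e3 : C1 * (Cf * h ^ (r - 1) * a ^ t) = Cf * h ^ (r - 1) * (C1 * a ^ t) := by ring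
    have e4 : Cf * h ^ (r - 1) * (C0 * b ^ t + C1 * a ^ t)
        = Cf * h ^ (r - 1) * (C0 * b ^ t) + Cf * h ^ (r - 1) * (C1 * a ^ t) := by ring
    have e5 : 0 ≤ Cf * h ^ (r - 1) * (C0 * b ^ t) := mul_nonneg hCfh (mul_pos hC0 hB).le
    linarith
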